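/- Let k be a field and p₁, p₂, p₃, p₄ ∈ P²(k) four points no three of which are collinear. The space of quadratic forms q in three variables (a 6-dimensional vector space) vanishing at all four points has dimension exactly 2. -/

import Mathlib

open MvPolynomial Matrix

namespace PencilAux

/-- exponent functions of the six quadratic monomials in three variables -/
def Mexp : Fin 6 → Fin 3 → ℕ :=
  ![![2,0,0], ![0,2,0], ![0,0,2], ![1,1,0], ![1,0,1], ![0,1,1]]

noncomputable def mexp (j : Fin 6) : Fin 3 →₀ ℕ := Finsupp.equivFunOnFinite.symm (Mexp j)

lemma mexp_coe (j : Fin 6) : ⇑(mexp j) = Mexp j := rfl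

lemma Mexp_inj : Function.Injective Mexp := by decide

lemma mexp_inj : Function.Injective mexp := by
  intro a b h
  exact Mexp_inj (by rw [← mexp_coe, ← mexp_coe, h])

lemma degree_eq_sum (d : Fin 3 →₀ ℕ) : d.degree = d 0 + d 1 + d 2 := by
  rw [Finsupp.degree_apply,
    Finset.sum_subset (Finset.subset_univ d.support)
      (fun x _ hx => Finsupp.notMem_support_iff.mp hx),
    Fin.sum_univ_three]

lemma mexp_degree (j : Fin 6) : (mexp j).degree = 2 := by
  rw [degree_eq_sum]
  fin_cases j <;> rfl

lemma enum (d : Fin 3 →₀ ℕ) (hd : d.degree = 2) : ∃ j, mexp j = d := by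
  rw [degree_eq_sum] at hd
  suffices h : ∃ j, ∀ x, Mexp j x = d x by
    obtain ⟨j, hj⟩ := h
    exact ⟨j, Finsupp.ext fun x => hj x⟩
  have h0 : d 0 = 0 ∨ d 0 = 1 ∨ d 0 = 2 := by omega
  have h1 : d 1 = 0 ∨ d 1 = 1 ∨ d 1 = 2 := by omega
  rcases h0 with h0 | h0 | h0 <;> rcases h1 with h1 | h1 | h1
  · exact ⟨2, fun x => match x with
      | 0 => by show (0:ℕ) = d 0; omega
      | 1 => by show (0:ℕ) = d 1; omega
      | 2 => by show (2:ℕ) = d 2; omega⟩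
  · exact ⟨5, fun x => match x with
      | 0 => by show (0:ℕ) = d 0; omega
      | 1 => by show (1:ℕ) = d 1; omega
      | 2 => by show (1:ℕ) = d 2; omega⟩
  · exact ⟨1, fun x => match x with
      | 0 => by show (0:ℕ) = d 0; omega
      | 1 => by show (2:ℕ) = d 1; omega
      | 2 => by show (0:ℕ) = d 2; omega⟩
  · exact ⟨4, fun x => match x with
      | 0 => by show (1:ℕ) = d 0; omega
      | 1 => by show (0:ℕ) = d 1; omega
      | 2 => by show (1:ℕ) = d 2; omega⟩
  · exact ⟨3, fun x => match x with
      | 0 => by show (1:ℕ) = d 0; omega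
      | 1 => by show (1:ℕ) = d 1; omega
      | 2 => by show (0:ℕ) = d 2; omega⟩
  · omega
  · exact ⟨0, fun x => match x with
      | 0 => by show (2:ℕ) = d 0; omega
      | 1 => by show (0:ℕ) = d 1; omega
      | 2 => by show (0:ℕ) = d 2; omega⟩
  · omega
  · omega

variable {k : Type*} [Field k]

/-- the parametrization of quadratic forms by their six coefficients -/
noncomputable def φ : (Fin 6 → k) →ₗ[k] MvPolynomial (Fin 3) k where
  toFun c := ∑ j, monomial (mexp j) (c j)
  map_add' c d := by simp [map_add, Finset.sum_add_distrib]
  map_smul' r c := by simp [Finset.smul_sum, smul_monomial]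

lemma φ_apply (c : Fin 6 → k) : φ c = ∑ j, monomial (mexp j) (c j) := rfl

lemma coeff_φ (c : Fin 6 → k) (j : Fin 6) : coeff (mexp j) (φ c) = c j := by
  classical
  rw [φ_apply]
  simp only [coeff_sum, coeff_monomial, mexp_inj.eq_iff]
  rw [Finset.sum_ite_eq' Finset.univ j c]
  simp

lemma φ_inj : Function.Injective (φ (k := k)) := by
  rw [injective_iff_map_eq_zero]
  intro c hc
  funext j
  have h := coeff_φ c j
  rw [hc] at h
  simpa using h.symm

lemma range_φ : LinearMap.range (φ (k := k)) = homogeneousSubmodule (Fin 3) k 2 := by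
  apply le_antisymm
  · rintro _ ⟨c, rfl⟩
    rw [φ_apply]
    exact Submodule.sum_mem _ fun j _ =>
      (mem_homogeneousSubmodule _ _).mpr (isHomogeneous_monomial _ (mexp_degree j))
  · intro p hp
    refine ⟨fun j => coeff (mexp j) p, ?_⟩
    have hph : p.IsHomogeneous 2 := (mem_homogeneousSubmodule _ _).mp hp
    apply MvPolynomial.ext
    intro d
    classical
    rw [φ_apply]
    simp only [coeff_sum, coeff_monomial]
    by_cases hd : d.degree = 2
    · obtain ⟨j0, rfl⟩ := enum d hd
      simp only [mexp_inj.eq_iff]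
      rw [Finset.sum_ite_eq' Finset.univ j0]
      simp
    · rw [hph.coeff_eq_zero hd]
      refine Finset.sum_eq_zero fun j _ => ?_
      rw [if_neg]
      rintro rfl
      exact hd (mexp_degree j)

/-- linear form with coefficients `c` -/
noncomputable def Lf (c : Fin 3 → k) : MvPolynomial (Fin 3) k := ∑ x, C (c x) * X x

lemma Lf_homog (c : Fin 3 → k) : (Lf c).IsHomogeneous 1 := by
  apply IsHomogeneous.sum
  intro x _
  simpa using (isHomogeneous_C (Fin 3) (c x)).mul (isHomogeneous_X k x)

lemma aeval_Lf (w c : Fin 3 → k) : aeval w (Lf c) = c ⬝ᵥ w := by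
  simp [Lf, dotProduct]

end PencilAux

open PencilAux in
open MvPolynomial in
theorem pencil_of_conics_through_four_points {k : Type*} [Field k]
    (v : Fin 4 → (Fin 3 → k))
    (hgen : ∀ i j l : Fin 4, i ≠ j → i ≠ l → j ≠ l →
      LinearIndependent k ![v i, v j, v l]) :
    Module.finrank k
      ↥(homogeneousSubmodule (Fin 3) k 2 ⊓
        ⨅ i : Fin 4, LinearMap.ker (aeval (R := k) (v i)).toLinearMap) = 2 := by
  classical
  set Φ : MvPolynomial (Fin 3) k →ₗ[k] (Fin 4 → k) :=
    LinearMap.pi fun i => (aeval (R := k) (v i)).toLinearMap with hΦ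
  set Ψ : (Fin 6 → k) →ₗ[k] (Fin 4 → k) := Φ ∘ₗ φ with hΨ
  -- the target submodule is the image of ker Ψ
  have hT : (homogeneousSubmodule (Fin 3) k 2 ⊓
      ⨅ i : Fin 4, LinearMap.ker (aeval (R := k) (v i)).toLinearMap)
      = Submodule.map (φ : (Fin 6 → k) →ₗ[k] MvPolynomial (Fin 3) k) (LinearMap.ker Ψ) := by
    ext p
    simp only [Submodule.mem_inf, Submodule.mem_iInf, LinearMap.mem_ker, Submodule.mem_map,
      AlgHom.toLinearMap_apply]
    constructor
    · rintro ⟨hpS, hker⟩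
      rw [← range_φ] at hpS
      obtain ⟨c, rfl⟩ := hpS
      refine ⟨c, ?_, rfl⟩
      funext i
      simpa [hΨ, hΦ, LinearMap.pi_apply] using hker i
    · rintro ⟨c, hc, rfl⟩
      have hm : φ c ∈ homogeneousSubmodule (Fin 3) k 2 := by
        rw [← range_φ]; exact LinearMap.mem_range_self _ c
      refine ⟨hm, fun i => ?_⟩
      simpa [hΨ, hΦ, LinearMap.pi_apply] using congrFun hc i
  rw [hT, ← (Submodule.equivMapOfInjective (φ : (Fin 6 → k) →ₗ[k] MvPolynomial (Fin 3) k)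
    φ_inj (LinearMap.ker Ψ)).finrank_eq]
  -- Ψ is surjective
  have hdet : ∀ x y z : Fin 4, x ≠ y → x ≠ z → y ≠ z →
      v x ⬝ᵥ (crossProduct (v y)) (v z) ≠ 0 := by
    intro x y z hxy hxz hyz
    rw [triple_product_eq_det]
    have hunit : IsUnit (Matrix.of ![v x, v y, v z]) :=
      Matrix.linearIndependent_rows_iff_isUnit.mp (hgen x y z hxy hxz hyz)
    exact ((Matrix.isUnit_iff_isUnit_det _).mp hunit).ne_zero
  have key : ∀ i : Fin 4, ∃ y ∈ LinearMap.range Ψ, y i ≠ 0 ∧ ∀ j, j ≠ i → y j = 0 := by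
    intro i
    obtain ⟨a, b, c, h⟩ : ∃ a b c : Fin 4, a ≠ b ∧ a ≠ c ∧ b ≠ c ∧ i ≠ a ∧ i ≠ b ∧ i ≠ c ∧
        ∀ j : Fin 4, j = i ∨ j = a ∨ j = b ∨ j = c := by
      fin_cases i
      · exact ⟨1, 2, 3, by decide⟩
      · exact ⟨0, 2, 3, by decide⟩
      · exact ⟨0, 1, 3, by decide⟩
      · exact ⟨0, 1, 2, by decide⟩
    obtain ⟨hab, hac, hbc, hia, hib, hic, hcover⟩ := h
    set q : MvPolynomial (Fin 3) k :=
      Lf (crossProduct (v a) (v b)) * Lf (crossProduct (v a) (v c)) with hq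
    have hqS : q ∈ LinearMap.range (φ : (Fin 6 → k) →ₗ[k] MvPolynomial (Fin 3) k) := by
      rw [range_φ]
      exact (mem_homogeneousSubmodule _ _).mpr ((Lf_homog _).mul (Lf_homog _))
    obtain ⟨cq, hcq⟩ := hqS
    have hval : ∀ j : Fin 4, Ψ cq j =
        (v j ⬝ᵥ (crossProduct (v a)) (v b)) * (v j ⬝ᵥ (crossProduct (v a)) (v c)) := by
      intro j
      have : Ψ cq j = aeval (v j) q := by
        rw [hΨ, hΦ]
        simp [LinearMap.pi_apply, hcq]
      rw [this, hq, _root_.map_mul, aeval_Lf, aeval_Lf, dotProduct_comm, dotProduct_comm (crossProduct (v a) (v c))]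
    refine ⟨Ψ cq, LinearMap.mem_range_self _ _, ?_, ?_⟩
    · rw [hval i]
      exact mul_ne_zero (hdet i a b hia hib hab) (hdet i a c hia hic hac)
    · intro j hj
      rw [hval j]
      rcases hcover j with rfl | rfl | rfl | rfl
      · exact absurd rfl hj
      · rw [dot_self_cross, zero_mul]
      · rw [dot_cross_self, zero_mul]
      · rw [mul_eq_zero]; right; exact dot_cross_self _ _
  have hsurj : LinearMap.range Ψ = ⊤ := by
    rw [eq_top_iff]
    intro x _
    have hsingle : ∀ i : Fin 4, (Pi.single i (1 : k) : Fin 4 → k) ∈ LinearMap.range Ψ := by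
      intro i
      obtain ⟨y, hy, hyi, hyj⟩ := key i
      have hxy : (Pi.single i (1 : k) : Fin 4 → k) = (y i)⁻¹ • y := by
        funext j
        by_cases hji : j = i
        · subst hji; simp [inv_mul_cancel₀ hyi]
        · simp [Pi.single_eq_of_ne hji, hyj j hji]
      rw [hxy]
      exact Submodule.smul_mem _ _ hy
    have hx : x = ∑ i : Fin 4, x i • (Pi.single i (1 : k) : Fin 4 → k) := by
      funext j
      simp [Pi.single_apply, Finset.sum_apply]
    rw [hx]
    exact Submodule.sum_mem _ fun i _ => Submodule.smul_mem _ _ (hsingle i)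
  have h1 := LinearMap.finrank_range_add_finrank_ker Ψ
  rw [hsurj, finrank_top, Module.finrank_fin_fun, Module.finrank_fin_fun] at h1
  omega
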